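/- arXiv:2604.05765 — 2 statements merged into one kernel-verified Lean document; each statement's English description precedes it below -/
import Mathlib

section
/- Let μ₀ > 0, 1/2 < β < 1, γ > 0, t > 0 and μ < μ₀ − γt. Then (μ₀−μ−γt)^β · ∫₀ᵗ (μ₀−μ−γs)^{−1/2−β} (t−s)^{−1/2} ds ≤ C/γ^{1/2}, with C depending only on β. -/
open Real MeasureTheory intervalIntegral Set

lemma stmt4_aux (β a γ t : ℝ) (hβ0 : 0 < β) (ha : 0 < a) (hγ : 0 < γ) (ht : 0 < t) :
    ∫ u in (0:ℝ)..t, (a + γ * u) ^ (-(1:ℝ)/2 - β) * u ^ (-(1:ℝ)/2)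
      ≤ (2 + 1/β) * (a ^ (-β) * γ ^ (-((1:ℝ)/2))) := by
  set e : ℝ := -(1:ℝ)/2 - β with he
  have he0 : e ≤ 0 := by rw [he]; linarith
  set F : ℝ → ℝ := fun u => (a + γ * u) ^ e * u ^ (-(1:ℝ)/2) with hF
  have hFnn : ∀ u : ℝ, 0 ≤ u → 0 ≤ F u := fun u hu => by
    apply mul_nonneg (Real.rpow_nonneg (by nlinarith) _) (Real.rpow_nonneg hu _)
  have hFle : ∀ u : ℝ, 0 ≤ u → F u ≤ a ^ e * u ^ (-(1:ℝ)/2) := by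
    intro u hu
    apply mul_le_mul_of_nonneg_right _ (Real.rpow_nonneg hu _)
    exact Real.rpow_le_rpow_of_nonpos ha (by nlinarith) he0
  have hFmeas : ∀ c d : ℝ, AEStronglyMeasurable F (volume.restrict (Set.uIoc c d)) := by
    intro c d
    apply Measurable.aestronglyMeasurable
    fun_prop
  have hFint : ∀ c : ℝ, 0 ≤ c → IntervalIntegrable F volume 0 c := by
    intro c hc
    apply IntervalIntegrable.mono_fun'
      (g := fun u => a ^ e * u ^ (-(1:ℝ)/2))
      ((intervalIntegral.intervalIntegrable_rpow' (by norm_num)).const_mul _) (hFmeas 0 c)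
    filter_upwards [ae_restrict_mem measurableSet_uIoc] with u hu
    rw [Set.uIoc_of_le hc] at hu
    rw [Real.norm_of_nonneg (hFnn u hu.1.le)]
    exact hFle u hu.1.le
  have hgint : ∀ c : ℝ, IntervalIntegrable (fun u => a ^ e * u ^ (-(1:ℝ)/2)) volume 0 c :=
    fun c => (intervalIntegral.intervalIntegrable_rpow' (by norm_num)).const_mul _
  -- first-piece estimate
  have key1 : ∀ c : ℝ, 0 ≤ c → ∫ u in (0:ℝ)..c, F u ≤ 2 * a ^ e * c ^ ((1:ℝ)/2) := by
    intro c hc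
    calc ∫ u in (0:ℝ)..c, F u ≤ ∫ u in (0:ℝ)..c, a ^ e * u ^ (-(1:ℝ)/2) :=
          intervalIntegral.integral_mono_on hc (hFint c hc) (hgint c)
            (fun u hu => hFle u hu.1)
      _ = a ^ e * ∫ u in (0:ℝ)..c, u ^ (-(1:ℝ)/2) := by
          rw [intervalIntegral.integral_const_mul]
      _ = 2 * a ^ e * c ^ ((1:ℝ)/2) := by
          rw [integral_rpow (Or.inl (by norm_num))]
          rw [show (-(1:ℝ)/2 + 1) = 1/2 by norm_num,
            Real.zero_rpow (by norm_num : (1:ℝ)/2 ≠ 0)]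
          ring
  have h1 : e + (1:ℝ)/2 = -β := by rw [he]; ring
  have halg : a ^ e * (a / γ) ^ ((1:ℝ)/2) = a ^ (-β) * γ ^ (-((1:ℝ)/2)) := by
    rw [Real.div_rpow ha.le hγ.le, ← mul_div_assoc, ← Real.rpow_add ha, h1,
      Real.rpow_neg hγ.le, div_eq_mul_inv]
  have hpos : 0 < a ^ (-β) * γ ^ (-((1:ℝ)/2)) := by positivity
  rcases le_or_gt t (a / γ) with hcase | hcase
  · calc ∫ u in (0:ℝ)..t, F u ≤ 2 * a ^ e * t ^ ((1:ℝ)/2) := key1 t ht.le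
      _ ≤ 2 * a ^ e * (a / γ) ^ ((1:ℝ)/2) := by
          apply mul_le_mul_of_nonneg_left
            (Real.rpow_le_rpow ht.le hcase (by norm_num))
          positivity
      _ = 2 * (a ^ (-β) * γ ^ (-((1:ℝ)/2))) := by rw [mul_assoc, halg]
      _ ≤ (2 + 1/β) * (a ^ (-β) * γ ^ (-((1:ℝ)/2))) := by
          apply mul_le_mul_of_nonneg_right _ hpos.le
          have : 0 < 1/β := by positivity
          linarith
  · set m : ℝ := a / γ with hm_def
    have hm : 0 < m := by positivity
    have hmt : m < t := hcase
    have hcont : IntervalIntegrable F volume m t := by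
      apply ContinuousOn.intervalIntegrable
      apply ContinuousOn.mul
      · apply ContinuousOn.rpow_const
        · exact (continuous_const.add (continuous_const.mul continuous_id)).continuousOn
        · intro u hu
          have : m ≤ u := by
            rcases hu with hu
            rw [Set.uIcc_of_le hmt.le] at hu
            exact hu.1
          left; nlinarith
      · apply ContinuousOn.rpow_const continuousOn_id
        intro u hu
        rw [Set.uIcc_of_le hmt.le] at hu
        left; exact ne_of_gt (lt_of_lt_of_le hm hu.1)
    have hsplit : ∫ u in (0:ℝ)..t, F u = (∫ u in (0:ℝ)..m, F u) + ∫ u in m..t, F u :=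
      (intervalIntegral.integral_add_adjacent_intervals (hFint m hm.le) hcont).symm
    have hH : IntervalIntegrable (fun u => γ ^ e * u ^ (-1 - β)) volume m t := by
      apply IntervalIntegrable.const_mul
      exact intervalIntegrable_rpow (Or.inr (notMem_uIcc_of_lt hm ht))
    have hub : ∫ u in m..t, F u ≤ γ ^ e * m ^ (-β) / β := by
      calc ∫ u in m..t, F u ≤ ∫ u in m..t, γ ^ e * u ^ (-1 - β) := by
            apply intervalIntegral.integral_mono_on hmt.le hcont hH
            intro u hu
            have hu0 : 0 < u := lt_of_lt_of_le hm hu.1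
            have step1 : (a + γ * u) ^ e ≤ (γ * u) ^ e :=
              Real.rpow_le_rpow_of_nonpos (by positivity) (by nlinarith) he0
            have step2 : (γ * u) ^ e = γ ^ e * u ^ e := Real.mul_rpow hγ.le hu0.le
            have step3 : u ^ e * u ^ (-(1:ℝ)/2) = u ^ (-1 - β) := by
              rw [← Real.rpow_add hu0]; congr 1; rw [he]; ring
            calc F u ≤ (γ * u) ^ e * u ^ (-(1:ℝ)/2) :=
                  mul_le_mul_of_nonneg_right step1 (Real.rpow_nonneg hu0.le _)
              _ = γ ^ e * (u ^ e * u ^ (-(1:ℝ)/2)) := by rw [step2]; ring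
              _ = γ ^ e * u ^ (-1 - β) := by rw [step3]
        _ = γ ^ e * ∫ u in m..t, u ^ (-1 - β) := intervalIntegral.integral_const_mul _ _
        _ = γ ^ e * ((t ^ (-β) - m ^ (-β)) / (-β)) := by
            rw [integral_rpow (Or.inr ⟨by intro hc; nlinarith [hc], notMem_uIcc_of_lt hm ht⟩)]
            rw [show (-1 - β + 1) = -β by ring]
        _ = γ ^ e * ((m ^ (-β) - t ^ (-β)) / β) := by rw [div_neg]; ring
        _ ≤ γ ^ e * m ^ (-β) / β := by
            rw [mul_div_assoc]
            apply mul_le_mul_of_nonneg_left _ (Real.rpow_nonneg hγ.le e)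
            gcongr
            exact sub_le_self _ (Real.rpow_nonneg ht.le _)
    have h2 : e - (-β) = -((1:ℝ)/2) := by rw [he]; ring
    have halg2 : γ ^ e * m ^ (-β) = a ^ (-β) * γ ^ (-((1:ℝ)/2)) := by
      rw [hm_def, Real.div_rpow ha.le hγ.le,
        show γ ^ e * (a ^ (-β) / γ ^ (-β)) = a ^ (-β) * (γ ^ e / γ ^ (-β)) by ring,
        ← Real.rpow_sub hγ, h2]
    calc ∫ u in (0:ℝ)..t, F u = (∫ u in (0:ℝ)..m, F u) + ∫ u in m..t, F u := hsplit
      _ ≤ 2 * a ^ e * m ^ ((1:ℝ)/2) + γ ^ e * m ^ (-β) / β :=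
          add_le_add (key1 m hm.le) hub
      _ = 2 * (a ^ (-β) * γ ^ (-((1:ℝ)/2))) + (a ^ (-β) * γ ^ (-((1:ℝ)/2))) / β := by
          rw [mul_assoc, halg, halg2]
      _ = (2 + 1/β) * (a ^ (-β) * γ ^ (-((1:ℝ)/2))) := by
          field_simp

/-- `(μ₀−μ−γt)^β ∫₀ᵗ (μ₀−μ−γs)^{−1/2−β}(t−s)^{−1/2} ds ≤ C/γ^{1/2}`, `C = C(β)`. -/
theorem stmt_4 (β : ℝ) (hβ : 1/2 < β) (hβ1 : β < 1) :
    ∃ C : ℝ, 0 < C ∧ ∀ (μ₀ γ t μ : ℝ), 0 < μ₀ → 0 < γ → 0 < t → μ < μ₀ - γ * t →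
      (μ₀ - μ - γ * t) ^ β *
          ∫ s in (0:ℝ)..t, (μ₀ - μ - γ * s) ^ (-(1:ℝ)/2 - β) * (t - s) ^ (-(1:ℝ)/2)
        ≤ C / γ ^ ((1:ℝ)/2) := by
  have hβ0 : (0:ℝ) < β := by linarith
  refine ⟨2 + 1/β, by positivity, ?_⟩
  intro μ₀ γ t μ hμ₀ hγ ht h
  set a : ℝ := μ₀ - μ - γ * t with ha_def
  have ha : 0 < a := by rw [ha_def]; linarith
  have hrw : (∫ s in (0:ℝ)..t, (μ₀ - μ - γ * s) ^ (-(1:ℝ)/2 - β) * (t - s) ^ (-(1:ℝ)/2))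
      = ∫ u in (0:ℝ)..t, (a + γ * u) ^ (-(1:ℝ)/2 - β) * u ^ (-(1:ℝ)/2) := by
    have h1 : ∀ s : ℝ, μ₀ - μ - γ * s = a + γ * (t - s) := fun s => by rw [ha_def]; ring
    simp_rw [h1]
    simpa using intervalIntegral.integral_comp_sub_left (a := 0) (b := t)
      (fun u => (a + γ * u) ^ (-(1:ℝ)/2 - β) * u ^ (-(1:ℝ)/2)) t
  rw [hrw]
  have key := stmt4_aux β a γ t hβ0 ha hγ ht
  calc a ^ β * ∫ u in (0:ℝ)..t, (a + γ * u) ^ (-(1:ℝ)/2 - β) * u ^ (-(1:ℝ)/2)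
      ≤ a ^ β * ((2 + 1/β) * (a ^ (-β) * γ ^ (-((1:ℝ)/2)))) :=
        mul_le_mul_of_nonneg_left key (Real.rpow_nonneg ha.le β)
    _ = (2 + 1/β) / γ ^ ((1:ℝ)/2) := by
        have hone : a ^ β * a ^ (-β) = 1 := by
          rw [← Real.rpow_add ha]; simp
        rw [Real.rpow_neg hγ.le,
          show a ^ β * ((2 + 1/β) * (a ^ (-β) * (γ ^ ((1:ℝ)/2))⁻¹))
            = (2 + 1/β) * (a ^ β * a ^ (-β)) * (γ ^ ((1:ℝ)/2))⁻¹ by ring,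
          hone, mul_one]
        ring
end

section
/- Let μ₀ > 0, 1/2 < β < 1, γ > 0, t > 0 and 0 ≤ μ < μ₀ − γt. Then (μ₀−μ−γt)^β · ∫₀ᵗ (μ₀−μ−γs)^{−1} s^{−1/2} ds ≤ C/γ^{1/2}, with C depending only on β and μ₀. -/
open MeasureTheory intervalIntegral Set

/-- `(μ₀−μ−γt)^β ∫₀ᵗ (μ₀−μ−γs)^{−1} s^{−1/2} ds ≤ C/γ^{1/2}`, `C = C(β, μ₀)`. -/
theorem stmt_6 (β μ₀ : ℝ) (hβ : 1/2 < β) (hβ1 : β < 1) (hμ₀ : 0 < μ₀) :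
    ∃ C : ℝ, 0 < C ∧ ∀ (γ t μ : ℝ), 0 < γ → 0 < t → 0 ≤ μ → μ < μ₀ - γ * t →
      (μ₀ - μ - γ * t) ^ β *
          ∫ s in (0:ℝ)..t, (μ₀ - μ - γ * s) ^ (-1 : ℝ) * s ^ (-(1:ℝ)/2)
        ≤ C / γ ^ ((1:ℝ)/2) := by
  have hβ0 : (0:ℝ) < β := by linarith
  refine ⟨(2 + 1/β) * μ₀ ^ (β - 1/2), by positivity, ?_⟩
  intro γ t μ hγ ht hμ hμt
  set a : ℝ := μ₀ - μ - γ * t with ha_def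
  have ha : 0 < a := by simp only [ha_def]; linarith
  have hT : 0 < t/2 := by linarith
  set f : ℝ → ℝ := fun s => (μ₀ - μ - γ * s) ^ (-1 : ℝ) * s ^ (-(1:ℝ)/2) with hf_def
  set F : ℝ → ℝ := fun s => a ^ β * f s with hF_def
  -- the base is at least `a` on `[0, t]`
  have hbase : ∀ s, s ≤ t → a ≤ μ₀ - μ - γ * s := by
    intro s hs
    have : γ * s ≤ γ * t := by nlinarith
    simp only [ha_def]; linarith
  -- key algebraic estimate: if `a + d ≤ X` with `d > 0`, then `a^β * X⁻¹ ≤ (γ*d')^(β-1)`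
  -- we use it with `d = γ * d'`.
  have key : ∀ d X : ℝ, 0 < d → a + γ * d ≤ X →
      a ^ β * X ^ (-1:ℝ) ≤ (γ * d) ^ (β - 1) := by
    intro d X hd hX
    have hgd : 0 < γ * d := by positivity
    have hamgm : a ^ β * (γ * d) ^ (1 - β) ≤ a + γ * d := by
      calc a ^ β * (γ * d) ^ (1 - β) ≤ β * a + (1 - β) * (γ * d) :=
            Real.geom_mean_le_arith_mean2_weighted (by linarith) (by linarith) ha.le hgd.le
              (by ring)
        _ ≤ a + γ * d := by nlinarith
    have hB : 0 < a ^ β * (γ * d) ^ (1 - β) := by positivity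
    have hXpos : 0 < X := lt_of_lt_of_le (by linarith) hX
    have h1 : X ^ (-1:ℝ) ≤ (a ^ β * (γ * d) ^ (1 - β))⁻¹ := by
      rw [Real.rpow_neg_one]
      exact inv_anti₀ hB (le_trans hamgm hX)
    calc a ^ β * X ^ (-1:ℝ) ≤ a ^ β * (a ^ β * (γ * d) ^ (1 - β))⁻¹ := by
          exact mul_le_mul_of_nonneg_left h1 (by positivity)
      _ = ((γ * d) ^ (1 - β))⁻¹ := by
          rw [mul_inv]
          have : a ^ β ≠ 0 := by positivity
          field_simp
      _ = (γ * d) ^ (β - 1) := by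
          rw [← Real.rpow_neg hgd.le, neg_sub]
  -- pointwise bound on the first piece
  set c1 : ℝ := (γ * (t/2)) ^ (β - 1) with hc1_def
  have hpt1 : ∀ s ∈ Icc (0:ℝ) (t/2), F s ≤ c1 * s ^ (-(1:ℝ)/2) := by
    intro s hs
    have hX : a + γ * (t/2) ≤ μ₀ - μ - γ * s := by
      have h2 : γ * s ≤ γ * (t/2) := by nlinarith [hs.2]
      have := hbase s (by linarith [hs.2])
      simp only [ha_def] at *; linarith
    have h1 : a ^ β * (μ₀ - μ - γ * s) ^ (-1:ℝ) ≤ c1 := key (t/2) _ hT hX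
    have h2 : (0:ℝ) ≤ s ^ (-(1:ℝ)/2) := Real.rpow_nonneg hs.1 _
    calc F s = (a ^ β * (μ₀ - μ - γ * s) ^ (-1:ℝ)) * s ^ (-(1:ℝ)/2) := by
          simp only [hF_def, hf_def]; ring
      _ ≤ c1 * s ^ (-(1:ℝ)/2) := mul_le_mul_of_nonneg_right h1 h2
  -- pointwise bound on the second piece (away from `s = t`)
  set c2 : ℝ := γ ^ (β - 1) * (t/2) ^ (-(1:ℝ)/2) with hc2_def
  have hpt2 : ∀ s ∈ Icc (t/2) t, s ≠ t → F s ≤ c2 * (t - s) ^ (β - 1) := by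
    intro s hs hst
    have hs0 : 0 < s := lt_of_lt_of_le hT hs.1
    have hts : 0 < t - s := lt_of_le_of_ne (by linarith [hs.2]) (by intro h; exact hst (by linarith))
    have hX : a + γ * (t - s) ≤ μ₀ - μ - γ * s := by simp only [ha_def]; ring_nf; nlinarith
    have h1 : a ^ β * (μ₀ - μ - γ * s) ^ (-1:ℝ) ≤ (γ * (t - s)) ^ (β - 1) :=
      key (t - s) _ hts hX
    have h2 : s ^ (-(1:ℝ)/2) ≤ (t/2) ^ (-(1:ℝ)/2) :=
      Real.rpow_le_rpow_of_nonpos hT hs.1 (by norm_num)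
    have h3 : (0:ℝ) ≤ s ^ (-(1:ℝ)/2) := Real.rpow_nonneg hs0.le _
    have h4 : (0:ℝ) ≤ a ^ β * (μ₀ - μ - γ * s) ^ (-1:ℝ) := by
      have := hbase s hs.2
      have : (0:ℝ) ≤ μ₀ - μ - γ * s := by linarith
      positivity
    calc F s = (a ^ β * (μ₀ - μ - γ * s) ^ (-1:ℝ)) * s ^ (-(1:ℝ)/2) := by
          simp only [hF_def, hf_def]; ring
      _ ≤ (γ * (t - s)) ^ (β - 1) * (t/2) ^ (-(1:ℝ)/2) := mul_le_mul h1 h2 h3 (by positivity)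
      _ = c2 * (t - s) ^ (β - 1) := by
          rw [Real.mul_rpow hγ.le hts.le, hc2_def]; ring
  -- continuity of F away from the singularities
  have hcont : ∀ S : Set ℝ, (∀ x ∈ S, 0 < x) → (∀ x ∈ S, x ≤ t) → ContinuousOn F S := by
    intro S hpos hle
    show ContinuousOn (fun s => a ^ β * ((μ₀ - μ - γ * s) ^ (-1:ℝ) * s ^ (-(1:ℝ)/2))) S
    refine continuousOn_const.mul (ContinuousOn.mul ?_ ?_)
    · refine ContinuousOn.rpow_const
        ((continuous_const.sub ((continuous_const (y := γ)).mul continuous_id')).continuousOn) ?_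
      intro x hx; exact Or.inl (ne_of_gt (lt_of_lt_of_le ha (hbase x (hle x hx))))
    · exact continuousOn_id.rpow_const fun x hx => Or.inl (ne_of_gt (hpos x hx))
  -- integrability on [0, t/2]
  have hIg1 : IntervalIntegrable (fun s : ℝ => c1 * s ^ (-(1:ℝ)/2)) volume 0 (t/2) :=
    (intervalIntegral.intervalIntegrable_rpow' (by norm_num)).const_mul c1
  have hIF1 : IntervalIntegrable F volume 0 (t/2) := by
    have hmF : AEStronglyMeasurable F (volume.restrict (Set.uIoc (0:ℝ) (t/2))) := by
      rw [uIoc_of_le (by linarith : (0:ℝ) ≤ t/2)]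
      exact ((hcont (Ioc 0 (t/2)) (fun x hx => hx.1)
        (fun x hx => le_trans hx.2 (by linarith))).aestronglyMeasurable measurableSet_Ioc)
    refine hIg1.mono_fun' hmF ?_
    rw [Filter.EventuallyLE, ae_restrict_iff' measurableSet_uIoc]
    refine Filter.Eventually.of_forall fun s hs => ?_
    rw [uIoc_of_le (by linarith : (0:ℝ) ≤ t/2)] at hs
    have hs' : s ∈ Icc (0:ℝ) (t/2) := ⟨hs.1.le, hs.2⟩
    have hXs : 0 < μ₀ - μ - γ * s := lt_of_lt_of_le ha (hbase s (by linarith [hs.2]))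
    have hFnn : 0 ≤ F s := by
      simp only [hF_def, hf_def]
      have := Real.rpow_nonneg hXs.le (-1:ℝ)
      have := Real.rpow_nonneg hs.1.le (-(1:ℝ)/2)
      positivity
    simpa [Real.norm_eq_abs, abs_of_nonneg hFnn] using hpt1 s hs'
  -- integrability on [t/2, t]
  have hIg2 : IntervalIntegrable (fun s : ℝ => c2 * (t - s) ^ (β - 1)) volume (t/2) t := by
    have hbase2 : IntervalIntegrable (fun u : ℝ => u ^ (β - 1)) volume (t/2) 0 :=
      intervalIntegral.intervalIntegrable_rpow' (by linarith)
    have := (hbase2.comp_sub_left t).const_mul c2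
    have e1 : t - t/2 = t/2 := by ring
    have e2 : t - 0 = t := by ring
    rwa [e1, e2] at this
  have hIF2 : IntervalIntegrable F volume (t/2) t := by
    apply ContinuousOn.intervalIntegrable
    rw [uIcc_of_le (by linarith : t/2 ≤ t)]
    exact hcont (Icc (t/2) t) (fun x hx => lt_of_lt_of_le hT hx.1) (fun x hx => hx.2)
  -- split the integral
  have hsplit : (∫ s in (0:ℝ)..t, F s) = (∫ s in (0:ℝ)..t/2, F s) + ∫ s in (t/2)..t, F s :=
    (intervalIntegral.integral_add_adjacent_intervals hIF1 hIF2).symm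
  -- bound piece 1
  have hJ1 : (∫ s in (0:ℝ)..t/2, F s) ≤ c1 * (2 * (t/2) ^ ((1:ℝ)/2)) := by
    have h := intervalIntegral.integral_mono_on (by linarith : (0:ℝ) ≤ t/2) hIF1 hIg1 hpt1
    have hcomp : (∫ s in (0:ℝ)..t/2, c1 * s ^ (-(1:ℝ)/2)) = c1 * (2 * (t/2) ^ ((1:ℝ)/2)) := by
      rw [intervalIntegral.integral_const_mul,
        integral_rpow (Or.inl (by norm_num : (-1:ℝ) < -(1:ℝ)/2))]
      rw [show (-(1:ℝ)/2 + 1) = 1/2 by norm_num,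
        Real.zero_rpow (by norm_num : (1:ℝ)/2 ≠ 0)]
      ring
    linarith [h, hcomp.le, hcomp.ge]
  -- bound piece 2
  have hJ2 : (∫ s in (t/2)..t, F s) ≤ c2 * ((t/2) ^ β / β) := by
    have hae : F ≤ᵐ[volume.restrict (Icc (t/2) t)] fun s => c2 * (t - s) ^ (β - 1) := by
      rw [Filter.EventuallyLE, ae_restrict_iff' measurableSet_Icc]
      have hne : ∀ᵐ s : ℝ ∂volume, s ≠ t := by
        refine (MeasureTheory.measure_eq_zero_iff_ae_notMem.mp (measure_singleton t)).mono ?_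
        intro x hx; simpa using hx
      exact hne.mono fun s hs hmem => hpt2 s hmem hs
    have h := intervalIntegral.integral_mono_ae_restrict (by linarith : t/2 ≤ t) hIF2 hIg2 hae
    have hcomp : (∫ s in (t/2)..t, c2 * (t - s) ^ (β - 1)) = c2 * ((t/2) ^ β / β) := by
      rw [intervalIntegral.integral_const_mul]
      have := intervalIntegral.integral_comp_sub_left (fun u : ℝ => u ^ (β - 1)) t
        (a := t/2) (b := t)
      rw [this, sub_self]
      have e1 : t - t/2 = t/2 := by ring
      rw [e1, integral_rpow (Or.inl (by linarith : (-1:ℝ) < β - 1))]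
      rw [Real.zero_rpow (by linarith : β - 1 + 1 ≠ 0)]
      ring_nf
    linarith [h, hcomp.le]
  -- put it together
  have hFa : a ^ β * (∫ s in (0:ℝ)..t, f s) = ∫ s in (0:ℝ)..t, F s := by
    simp only [hF_def]
    rw [intervalIntegral.integral_const_mul]
  have htotal : a ^ β * (∫ s in (0:ℝ)..t, f s)
      ≤ (2 + 1/β) * (γ ^ (β - 1) * (t/2) ^ (β - 1/2)) := by
    rw [hFa, hsplit]
    have e1 : c1 * (2 * (t/2) ^ ((1:ℝ)/2)) = 2 * (γ ^ (β - 1) * (t/2) ^ (β - 1/2)) := by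
      rw [hc1_def, Real.mul_rpow hγ.le hT.le]
      rw [show (β - 1/2 : ℝ) = (β - 1) + 1/2 by ring, Real.rpow_add hT]
      ring
    have e2 : c2 * ((t/2) ^ β / β) = (1/β) * (γ ^ (β - 1) * (t/2) ^ (β - 1/2)) := by
      rw [hc2_def]
      rw [show (β - 1/2 : ℝ) = -(1/2) + β by ring, Real.rpow_add hT]
      have : (t/2) ^ (-(1:ℝ)/2) = (t/2) ^ (-(1/2) : ℝ) := by norm_num
      rw [this]
      field_simp
    calc (∫ s in (0:ℝ)..t/2, F s) + ∫ s in (t/2)..t, F s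
        ≤ c1 * (2 * (t/2) ^ ((1:ℝ)/2)) + c2 * ((t/2) ^ β / β) := add_le_add hJ1 hJ2
      _ = (2 + 1/β) * (γ ^ (β - 1) * (t/2) ^ (β - 1/2)) := by rw [e1, e2]; ring
  -- final estimate in γ
  have hfin : γ ^ (β - 1) * (t/2) ^ (β - 1/2) ≤ μ₀ ^ (β - 1/2) / γ ^ ((1:ℝ)/2) := by
    have htle : t/2 ≤ μ₀ / γ := by
      rw [le_div_iff₀ hγ]
      nlinarith
    have h1 : (t/2) ^ (β - 1/2) ≤ (μ₀ / γ) ^ (β - 1/2) :=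
      Real.rpow_le_rpow hT.le htle (by linarith)
    have h2 : γ ^ (β - 1) * (t/2) ^ (β - 1/2) ≤ γ ^ (β - 1) * (μ₀ / γ) ^ (β - 1/2) :=
      mul_le_mul_of_nonneg_left h1 (Real.rpow_nonneg hγ.le _)
    have h3 : γ ^ (β - 1) * (μ₀ / γ) ^ (β - 1/2) = μ₀ ^ (β - 1/2) / γ ^ ((1:ℝ)/2) := by
      rw [Real.div_rpow hμ₀.le hγ.le]
      rw [div_eq_mul_inv, ← Real.rpow_neg hγ.le]
      rw [show γ ^ (β-1) * (μ₀ ^ (β - 1/2) * γ ^ (-(β - 1/2)))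
          = μ₀ ^ (β - 1/2) * (γ ^ (β-1) * γ ^ (-(β - 1/2))) by ring]
      rw [← Real.rpow_add hγ]
      rw [show β - 1 + -(β - 1/2) = -(1/2 : ℝ) by ring]
      rw [Real.rpow_neg hγ.le, ← div_eq_mul_inv]
    linarith [h2, h3.le]
  calc a ^ β * (∫ s in (0:ℝ)..t, f s)
      ≤ (2 + 1/β) * (γ ^ (β - 1) * (t/2) ^ (β - 1/2)) := htotal
    _ ≤ (2 + 1/β) * (μ₀ ^ (β - 1/2) / γ ^ ((1:ℝ)/2)) := by
        apply mul_le_mul_of_nonneg_left hfin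
        positivity
    _ = (2 + 1/β) * μ₀ ^ (β - 1/2) / γ ^ ((1:ℝ)/2) := by ring
end
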